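/- There exists a countable group H that is not logically noetherian; in fact, for a suitable countable group H there is an n, a subset S of FreeGroup (Fin n), and an element w ∈ cl_H(S) such that w ∉ cl_H(S₀) for every finite subset S₀ ⊆ S. -/

import Mathlib

open Equiv
open scoped commutatorElement

/-- The subgroup of finitary permutations of ℕ. -/
def FinitaryPerm : Subgroup (Equiv.Perm ℕ) where
  carrier := {σ | ∃ N, ∀ m, N ≤ m → σ m = m}
  one_mem' := ⟨0, fun _ _ => rfl⟩
  mul_mem' := by
    rintro σ τ ⟨N, hN⟩ ⟨M, hM⟩
    refine ⟨max N M, fun m hm => ?_⟩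
    rw [Equiv.Perm.mul_apply, hM m (le_trans (le_max_right _ _) hm),
      hN m (le_trans (le_max_left _ _) hm)]
  inv_mem' := by
    rintro σ ⟨N, hN⟩
    refine ⟨N, fun m hm => ?_⟩
    have h := hN m hm
    calc σ⁻¹ m = σ⁻¹ (σ m) := by rw [h]
    _ = m := σ.symm_apply_apply m

lemma finitaryPerm_pow_fix {σ : Equiv.Perm ℕ} {N : ℕ} (hN : ∀ m, N ≤ m → σ m = m) :
    ∀ n m, N ≤ m → (σ ^ n) m = m := by
  intro n
  induction n with
  | zero => intro m _; rfl
  | succ n ih =>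
    intro m hm
    rw [pow_succ, Equiv.Perm.mul_apply, hN m hm, ih m hm]

lemma finitaryPerm_lt {σ : Equiv.Perm ℕ} {N : ℕ} (hN : ∀ m, N ≤ m → σ m = m) :
    ∀ m, m < N → σ m < N := by
  intro m hm
  by_contra h
  push_neg at h
  have hu : σ (σ m) = σ m := hN (σ m) h
  have := σ.injective hu
  omega

lemma finitaryPerm_pow_lt {σ : Equiv.Perm ℕ} {N : ℕ} (hN : ∀ m, N ≤ m → σ m = m) :
    ∀ n m, m < N → (σ ^ n) m < N := by
  intro n
  induction n with
  | zero => intro m hm; simpa using hm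
  | succ n ih =>
    intro m hm
    rw [pow_succ, Equiv.Perm.mul_apply]
    exact ih _ (finitaryPerm_lt hN m hm)

/-- Every finitary permutation has finite order. -/
lemma finitaryPerm_torsion {σ : Equiv.Perm ℕ} (hσ : σ ∈ FinitaryPerm) :
    ∃ n, 1 ≤ n ∧ σ ^ n = 1 := by
  obtain ⟨N, hN⟩ := hσ
  set g : ℕ → (Fin N → Fin N) := fun n i => ⟨(σ ^ n) i, finitaryPerm_pow_lt hN n i i.2⟩ with hg
  obtain ⟨i, j, hij, hgij⟩ := Finite.exists_ne_map_eq_of_infinite g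
  wlog hlt : i < j generalizing i j
  · exact this j i hij.symm hgij.symm (by omega)
  have hpow : σ ^ j = σ ^ i := by
    ext m
    by_cases hm : m < N
    · have h2 := congrArg Fin.val (congrFun hgij ⟨m, hm⟩)
      simpa [hg] using h2.symm
    · push_neg at hm
      rw [finitaryPerm_pow_fix hN j m hm, finitaryPerm_pow_fix hN i m hm]
  refine ⟨j - i, by omega, ?_⟩
  have hij2 : i + (j - i) = j := by omega
  have : σ ^ i * σ ^ (j - i) = σ ^ i * 1 := by
    rw [mul_one, ← pow_add, hij2, hpow]
  exact mul_left_cancel this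

open Classical in
/-- Finitary permutations are countable. -/
instance : Countable FinitaryPerm := by
  have : Function.Injective (fun σ : FinitaryPerm => (List.range (Nat.find σ.2)).map σ.1) := by
    intro σ τ h
    have hlen : Nat.find σ.2 = Nat.find τ.2 := by
      simpa using congrArg List.length h
    apply Subtype.ext
    ext m
    by_cases hm : m < Nat.find σ.2
    · have h1 : m < ((List.range (Nat.find σ.2)).map σ.1).length := by simpa using hm
      have h2 : m < ((List.range (Nat.find τ.2)).map τ.1).length := by simpa [← hlen] using hm
      have := List.getElem_of_eq h h1
      simpa using this
    · push_neg at hm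
      rw [Nat.find_spec σ.2 m hm, Nat.find_spec τ.2 m (by omega)]
  exact this.countable

/-- The `k`-cycle `(0 1 2 ... k-1)` as a permutation of `ℕ`. -/
def natCycle (k : ℕ) : Equiv.Perm ℕ where
  toFun m := if m + 1 = k then 0 else if m < k then m + 1 else m
  invFun m := if k = 0 then m else if m = 0 then k - 1 else if m < k then m - 1 else m
  left_inv m := by
    dsimp only; split_ifs <;> first | omega | (exfalso; assumption)
  right_inv m := by
    dsimp only; split_ifs <;> first | omega | (exfalso; assumption)

lemma natCycle_mem (k : ℕ) : natCycle k ∈ FinitaryPerm := by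
  refine ⟨k, fun m hm => ?_⟩
  simp only [natCycle, Equiv.coe_fn_mk]
  split_ifs <;> omega

lemma natCycle_apply {k m : ℕ} (h : m + 1 < k) : natCycle k m = m + 1 := by
  simp only [natCycle, Equiv.coe_fn_mk]
  split_ifs <;> omega

lemma natCycle_pow_apply {k : ℕ} : ∀ j m, m + j < k → ((natCycle k) ^ j) m = m + j := by
  intro j
  induction j with
  | zero => intro m _; rfl
  | succ j ih =>
    intro m hm
    rw [pow_succ', Equiv.Perm.mul_apply, ih m (by omega), natCycle_apply (by omega)]
    omega

lemma swap01_mem : Equiv.swap 0 1 ∈ FinitaryPerm := by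
  refine ⟨2, fun m hm => ?_⟩
  exact Equiv.swap_apply_of_ne_of_ne (by omega) (by omega)

lemma swap_commute {u v s t : ℕ} (h1 : u ≠ s) (h2 : u ≠ t) (h3 : v ≠ s) (h4 : v ≠ t) :
    Commute (Equiv.swap u v) (Equiv.swap s t) := by
  unfold Commute SemiconjBy
  ext m
  simp only [Equiv.Perm.mul_apply, Equiv.swap_apply_def]
  split_ifs <;> omega

lemma swap_not_commute : ¬ Commute (Equiv.swap 1 2) (Equiv.swap (0:ℕ) 1) := by
  intro h
  have := congrFun (congrArg (fun e : Equiv.Perm ℕ => (e : ℕ → ℕ)) h) 0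
  simp [Equiv.Perm.mul_apply, Equiv.swap_apply_def] at this

/-- The word `⁅x⁻ʲ y xʲ, y⁆` in the free group on two generators. -/
def tWord (j : ℕ) : FreeGroup (Fin 2) :=
  ⁅(FreeGroup.of (0 : Fin 2) ^ j)⁻¹ * FreeGroup.of (1 : Fin 2) * FreeGroup.of (0 : Fin 2) ^ j,
    FreeGroup.of (1 : Fin 2)⁆

open Classical in
noncomputable def idx (s : FreeGroup (Fin 2)) : ℕ :=
  if h : ∃ j, 2 ≤ j ∧ tWord j = s then h.choose else 0

lemma idx_spec {s : FreeGroup (Fin 2)} (h : ∃ j, 2 ≤ j ∧ tWord j = s) :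
    2 ≤ idx s ∧ tWord (idx s) = s := by
  rw [idx]
  classical
  rw [dif_pos h]
  exact h.choose_spec

noncomputable def ψ (k : ℕ) : FreeGroup (Fin 2) →* FinitaryPerm :=
  FreeGroup.lift ![⟨(natCycle k)⁻¹, inv_mem (natCycle_mem k)⟩, ⟨Equiv.swap 0 1, swap01_mem⟩]

noncomputable def Ψ (k : ℕ) : FreeGroup (Fin 2) →* Equiv.Perm ℕ :=
  FinitaryPerm.subtype.comp (ψ k)

lemma Ψ_t {k j : ℕ} (hj : j + 1 < k) :
    Ψ k (tWord j) = ⁅Equiv.swap j (j + 1), Equiv.swap 0 1⁆ := by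
  have h0 : Ψ k (FreeGroup.of 0) = (natCycle k)⁻¹ := by
    simp [Ψ, ψ, FreeGroup.lift_apply_of]
  have h1 : Ψ k (FreeGroup.of 1) = Equiv.swap 0 1 := by
    simp [Ψ, ψ, FreeGroup.lift_apply_of]
  have hρ0 : (natCycle k ^ j) 0 = j := by
    simpa using natCycle_pow_apply (k := k) j 0 (by omega)
  have hρ1 : (natCycle k ^ j) 1 = j + 1 := by
    have := natCycle_pow_apply (k := k) j 1 (by omega)
    omega
  have hconj : ((natCycle k)⁻¹ ^ j)⁻¹ * Equiv.swap 0 1 * (natCycle k)⁻¹ ^ j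
      = Equiv.swap j (j + 1) := by
    rw [inv_pow, inv_inv]
    calc natCycle k ^ j * Equiv.swap 0 1 * (natCycle k ^ j)⁻¹
        = Equiv.swap ((natCycle k ^ j) 0) ((natCycle k ^ j) 1) :=
          (Equiv.swap_apply_apply _ 0 1).symm
      _ = Equiv.swap j (j + 1) := by rw [hρ0, hρ1]
  simp only [tWord, map_commutatorElement, map_mul, map_inv, map_pow, h0, h1, hconj]

lemma psi_t_eq_one {k j : ℕ} (hj : j + 1 < k) (h2 : 2 ≤ j) : ψ k (tWord j) = 1 := by
  have h := Ψ_t hj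
  have hc : ⁅Equiv.swap j (j + 1), Equiv.swap (0:ℕ) 1⁆ = 1 :=
    commutatorElement_eq_one_iff_commute.mpr
      (swap_commute (by omega) (by omega) (by omega) (by omega))
  apply Subtype.ext
  have : Ψ k (tWord j) = (ψ k (tWord j) : Equiv.Perm ℕ) := rfl
  rw [← this, h, hc]
  rfl

lemma psi_t_one_ne_one {k : ℕ} (hk : 4 ≤ k) : ψ k (tWord 1) ≠ 1 := by
  intro h
  have h' : Ψ k (tWord 1) = 1 := by
    have : Ψ k (tWord 1) = (ψ k (tWord 1) : Equiv.Perm ℕ) := rfl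
    rw [this, h]; rfl
  rw [Ψ_t (by omega)] at h'
  exact swap_not_commute (commutatorElement_eq_one_iff_commute.mp h')

/-- The `H`-closure of a set `S` of elements of the free group on `n` generators. -/
def GClosure (H : Type*) [Group H] {n : ℕ} (S : Set (FreeGroup (Fin n))) :
    Set (FreeGroup (Fin n)) :=
  {w | ∀ φ : FreeGroup (Fin n) →* H, (∀ s ∈ S, φ s = 1) → φ w = 1}

/-- There is a countable group `H` that is not logically noetherian: for some `n`,
some `S ⊆ FreeGroup (Fin n)` and some `w ∈ cl_H(S)`, no finite subset `S₀ ⊆ S`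
satisfies `w ∈ cl_H(S₀)`. -/
theorem exists_countable_group_not_logicallyNoetherian :
    ∃ (H : Type) (instH : Group H), Countable H ∧
      ∃ (n : ℕ) (S : Set (FreeGroup (Fin n))) (w : FreeGroup (Fin n)),
        w ∈ @GClosure H instH n S ∧
          ∀ S₀ : Finset (FreeGroup (Fin n)), ↑S₀ ⊆ S →
            w ∉ @GClosure H instH n (S₀ : Set (FreeGroup (Fin n))) := by
  refine ⟨FinitaryPerm, inferInstance, inferInstance, 2, tWord '' {j | 2 ≤ j}, tWord 1, ?_, ?_⟩
  · -- `tWord 1` is in the closure of all `tWord j`, `j ≥ 2`.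
    intro φ hφ
    obtain ⟨n, hn1, hn⟩ := finitaryPerm_torsion (φ (FreeGroup.of (0 : Fin 2))).2
    have hpow : φ (FreeGroup.of (0 : Fin 2)) ^ n = 1 := by
      apply Subtype.ext
      push_cast
      simpa using hn
    have hA : φ (FreeGroup.of (0 : Fin 2)) ^ (n + 1) = φ (FreeGroup.of (0 : Fin 2)) ^ 1 := by
      rw [pow_succ, hpow, one_mul, pow_one]
    have hmem : tWord (n + 1) ∈ tWord '' {j | 2 ≤ j} :=
      ⟨n + 1, by simp only [Set.mem_setOf_eq]; omega, rfl⟩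
    have h := hφ (tWord (n + 1)) hmem
    have heq : φ (tWord (n + 1)) = φ (tWord 1) := by
      simp only [tWord, map_commutatorElement, map_mul, map_inv, map_pow, hA]
    rw [← heq]
    exact h
  · -- no finite subset suffices
    intro S₀ hS₀ hw
    set J := S₀.sup idx with hJ
    have hkill : ∀ s ∈ S₀, ψ (J + 4) s = 1 := by
      intro s hs
      obtain ⟨j, hj2, hjt⟩ := hS₀ hs
      have hex : ∃ j, 2 ≤ j ∧ tWord j = s := ⟨j, hj2, hjt⟩
      obtain ⟨hi2, hit⟩ := idx_spec hex
      have hle : idx s ≤ J := Finset.le_sup hs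
      rw [← hit]
      exact psi_t_eq_one (by omega) hi2
    have := hw (ψ (J + 4)) hkill
    exact psi_t_one_ne_one (by omega) this
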